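/- arXiv:2410.05207 — 2 statements merged into one kernel-verified Lean document; each statement's English description precedes it below -/
import Mathlib

section
/- For all positive integers n and k with n >= k, sum_{i=k}^{n} S(n, i) * s(i, k) / i = (1/n) * binom(n, k) * B_{n-k} + delta_{n-1, k}, where delta is the Kronecker delta. -/
open Finset

/-- Stirling numbers of the second kind. -/
def stirling2 : ℕ → ℕ → ℕ
  | 0, 0 => 1
  | 0, _ + 1 => 0
  | _ + 1, 0 => 0
  | n + 1, k + 1 => stirling2 n k + (k + 1) * stirling2 n (k + 1)

/-- Signed Stirling numbers of the first kind. -/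
def stirling1 : ℕ → ℕ → ℤ
  | 0, 0 => 1
  | 0, _ + 1 => 0
  | n + 1, 0 => -(n : ℤ) * stirling1 n 0
  | n + 1, k + 1 => stirling1 n k - (n : ℤ) * stirling1 n (k + 1)

/-- Bernoulli numbers of the second kind: `∫₀¹ x(x-1)⋯(x-n+1) dx`. -/
noncomputable def bernoulliStar (n : ℕ) : ℝ :=
  ∫ x in (0:ℝ)..1, (descPochhammer ℝ n).eval x

lemma stirling2_zero_right (n : ℕ) (hn : 0 < n) : stirling2 n 0 = 0 := by
  cases n with
  | zero => omega
  | succ n => rfl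

lemma stirling2_eq_zero : ∀ {n k : ℕ}, n < k → stirling2 n k = 0 := by
  intro n
  induction n with
  | zero => intro k h; cases k with | zero => omega | succ k => rfl
  | succ n ih =>
    intro k h
    cases k with
    | zero => omega
    | succ k =>
      show stirling2 n k + (k + 1) * stirling2 n (k + 1) = 0
      rw [ih (by omega), ih (by omega)]; simp

lemma stirling1_eq_zero : ∀ {i k : ℕ}, i < k → stirling1 i k = 0 := by
  intro i
  induction i with
  | zero => intro k h; cases k with | zero => omega | succ k => rfl
  | succ i ih =>
    intro k h
    cases k with
    | zero => omega
    | succ k =>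
      show stirling1 i k - (i : ℤ) * stirling1 i (k + 1) = 0
      rw [ih (by omega), ih (by omega)]; ring

lemma mul_descFactorial (x i : ℕ) :
    x * x.descFactorial i = x.descFactorial (i + 1) + i * x.descFactorial i := by
  rw [Nat.descFactorial_succ]
  rcases le_or_gt i x with h | h
  · rw [← Nat.add_mul, Nat.sub_add_cancel h]
  · rw [Nat.descFactorial_eq_zero_iff_lt.2 h]; simp

lemma pow_eq_sum_stirling2 (n x : ℕ) :
    x ^ n = ∑ i ∈ range (n + 1), stirling2 n i * x.descFactorial i := by
  induction n with
  | zero => simp [stirling2]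
  | succ n ih =>
    rw [pow_succ, ih, Finset.sum_mul]
    rw [Finset.sum_range_succ' (fun i => stirling2 (n+1) i * x.descFactorial i)]
    have h0 : stirling2 (n+1) 0 * x.descFactorial 0 = 0 := by
      rw [stirling2_zero_right (n+1) (by omega)]; simp
    rw [h0, add_zero]
    have step : ∀ i, stirling2 n i * x.descFactorial i * x
        = stirling2 n i * x.descFactorial (i+1) + i * (stirling2 n i * x.descFactorial i) := by
      intro i
      rw [mul_assoc, mul_comm (x.descFactorial i) x, mul_descFactorial]
      ring
    calc ∑ i ∈ range (n+1), stirling2 n i * x.descFactorial i * x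
        = ∑ i ∈ range (n+1), (stirling2 n i * x.descFactorial (i+1)
            + i * (stirling2 n i * x.descFactorial i)) := by
          exact Finset.sum_congr rfl (fun i _ => step i)
      _ = ∑ i ∈ range (n+1), stirling2 n i * x.descFactorial (i+1)
            + ∑ i ∈ range (n+1), i * (stirling2 n i * x.descFactorial i) := by
          rw [Finset.sum_add_distrib]
      _ = ∑ i ∈ range (n+1), stirling2 (n+1) (i+1) * x.descFactorial (i+1) := by
          have hsk : ∀ i, stirling2 (n+1) (i+1) = stirling2 n i + (i+1) * stirling2 n (i+1) := by
            intro i; rfl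
          have h2 : ∑ i ∈ range (n+1), i * (stirling2 n i * x.descFactorial i)
              = ∑ i ∈ range (n+1), (i+1) * stirling2 n (i+1) * x.descFactorial (i+1) := by
            rw [Finset.sum_range_succ' (fun i => i * (stirling2 n i * x.descFactorial i))]
            rw [Finset.sum_range_succ (fun i => (i+1) * stirling2 n (i+1) * x.descFactorial (i+1))]
            rw [stirling2_eq_zero (show n < n+1 by omega)]
            simp [mul_assoc]
          rw [h2, ← Finset.sum_add_distrib]
          exact Finset.sum_congr rfl (fun i _ => by rw [hsk]; ring)

lemma hockey (m j : ℕ) :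
    ∑ x ∈ range m, (j + 1) * x.descFactorial j = m.descFactorial (j + 1) := by
  induction m with
  | zero => simp
  | succ m ih =>
    rw [Finset.sum_range_succ, ih, Nat.succ_descFactorial_succ]
    rw [Nat.descFactorial_succ]
    rcases le_or_gt j m with h | h
    · rw [← Nat.add_mul]; congr 1; omega
    · rw [Nat.descFactorial_eq_zero_iff_lt.2 h]; simp

lemma inner_pow (n x : ℕ) (hn : 0 < n) :
    (x + 1) ^ (n - 1) = ∑ j ∈ range n, stirling2 n (j + 1) * x.descFactorial j := by
  have key : (x + 1) ^ n = (x + 1) * ∑ j ∈ range n, stirling2 n (j + 1) * x.descFactorial j := by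
    rw [pow_eq_sum_stirling2 n (x + 1),
      Finset.sum_range_succ' (fun i => stirling2 n i * (x+1).descFactorial i)]
    rw [stirling2_zero_right n hn]
    simp only [Nat.zero_mul, add_zero, Nat.succ_descFactorial_succ, Finset.mul_sum]
    exact Finset.sum_congr rfl (fun i _ => by ring)
  have hx : 0 < x + 1 := by omega
  have : (x + 1) * (x + 1) ^ (n - 1) = (x + 1) * ∑ j ∈ range n, stirling2 n (j + 1) * x.descFactorial j := by
    rw [← key, ← pow_succ']
    congr 1
    omega
  exact Nat.eq_of_mul_eq_mul_left hx this

open Polynomial in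
lemma coeff_descPochhammer (i : ℕ) : ∀ k, (descPochhammer ℚ i).coeff k = (stirling1 i k : ℚ) := by
  induction i with
  | zero =>
    intro k
    rw [descPochhammer_zero, Polynomial.coeff_one]
    cases k with
    | zero => simp [stirling1]
    | succ k => simp [stirling1]
  | succ i ih =>
    intro k
    rw [descPochhammer_succ_right, ← C_eq_natCast, mul_sub, Polynomial.coeff_sub,
      Polynomial.coeff_mul_C]
    cases k with
    | zero =>
      rw [Polynomial.coeff_mul_X_zero, ih 0]
      show (0:ℚ) - _ = ((-(i:ℤ) * stirling1 i 0 : ℤ) : ℚ)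
      push_cast
      ring
    | succ k =>
      rw [Polynomial.coeff_mul_X, ih k, ih (k+1)]
      show _ = ((stirling1 i k - (i:ℤ) * stirling1 i (k+1) : ℤ) : ℚ)
      push_cast
      ring

open Polynomial in
lemma stmt7_aux (n k : ℕ) (hn : 0 < n) (hk : 0 < k) (hkn : k ≤ n) :
    ∑ i ∈ Finset.Icc k n, (stirling2 n i : ℚ) * (stirling1 i k : ℚ) / i =
      1 / n * (n.choose k : ℚ) * _root_.bernoulli (n - k) + (if n - 1 = k then 1 else 0) := by
  classical
  set c : ℚ := if n - 1 = 0 then 1 else 0 with hc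
  set p : ℚ[X] := ∑ j ∈ range n, ((stirling2 n (j+1) : ℚ) / (j+1)) • descPochhammer ℚ (j+1) with hp
  set q : ℚ[X] := ∑ i ∈ range n, (_root_.bernoulli i * (n.choose i : ℚ) / n) • (X : ℚ[X]) ^ (n - i) with hq
  have qeval : ∀ M : ℕ, q.eval (M:ℚ) = ∑ x ∈ range M, (x:ℚ)^(n-1) := by
    intro M
    have h := sum_range_pow M (n-1)
    have hn1 : n - 1 + 1 = n := by omega
    have hcast : ((n-1:ℕ):ℚ) + 1 = (n:ℚ) := by exact_mod_cast congrArg (Nat.cast : ℕ → ℚ) hn1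
    rw [hn1, hcast] at h
    rw [h]
    simp only [hq, Polynomial.eval_finset_sum, Polynomial.eval_smul, Polynomial.eval_pow,
      Polynomial.eval_X, smul_eq_mul]
    exact Finset.sum_congr rfl (fun i _ => by ring)
  have c0 : ((0:ℕ):ℚ)^(n-1) = c := by
    rcases Nat.eq_zero_or_pos (n-1) with h | h
    · rw [h, hc, if_pos h]; simp
    · rw [hc, if_neg (by omega)]
      simp [zero_pow (by omega : n - 1 ≠ 0)]
  have peval : ∀ m : ℕ, p.eval (m:ℚ) = q.eval (m:ℚ) + (m:ℚ)^(n-1) - c := by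
    intro m
    have h1 : p.eval (m:ℚ) = ∑ x ∈ range m, ((x:ℚ)+1)^(n-1) := by
      simp only [hp, Polynomial.eval_finset_sum, Polynomial.eval_smul, smul_eq_mul,
        descPochhammer_eval_eq_descFactorial]
      have hterm : ∀ j, (stirling2 n (j+1) : ℚ)/(j+1) * (m.descFactorial (j+1) : ℚ)
          = ∑ x ∈ range m, (stirling2 n (j+1) : ℚ) * (x.descFactorial j : ℚ) := by
        intro j
        rw [← hockey m j]
        push_cast
        rw [Finset.mul_sum]
        refine Finset.sum_congr rfl (fun x _ => ?_)
        have : ((j:ℚ)+1) ≠ 0 := by positivity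
        field_simp
      calc ∑ j ∈ range n, (stirling2 n (j+1) : ℚ)/(j+1) * (m.descFactorial (j+1) : ℚ)
          = ∑ j ∈ range n, ∑ x ∈ range m, (stirling2 n (j+1) : ℚ) * (x.descFactorial j : ℚ) :=
            Finset.sum_congr rfl (fun j _ => hterm j)
        _ = ∑ x ∈ range m, ∑ j ∈ range n, (stirling2 n (j+1) : ℚ) * (x.descFactorial j : ℚ) :=
            Finset.sum_comm
        _ = ∑ x ∈ range m, ((x:ℚ)+1)^(n-1) := by
            refine Finset.sum_congr rfl (fun x _ => ?_)
            have h := inner_pow n x hn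
            have : (((x+1)^(n-1) : ℕ) : ℚ)
                = ((∑ j ∈ range n, stirling2 n (j+1) * x.descFactorial j : ℕ) : ℚ) := by
              exact_mod_cast congrArg (Nat.cast : ℕ → ℚ) h
            push_cast at this
            rw [← this]
    have h2 : ∑ x ∈ range m, ((x:ℚ)+1)^(n-1) = (∑ y ∈ range (m+1), (y:ℚ)^(n-1)) - c := by
      rw [Finset.sum_range_succ' (fun y => ((y:ℕ):ℚ)^(n-1)), c0]
      push_cast
      ring
    rw [h1, h2, qeval m, Finset.sum_range_succ]
  have hpq : p = q + X^(n-1) - C c := by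
    have hzero : p - (q + X^(n-1) - C c) = 0 := by
      apply Polynomial.eq_zero_of_infinite_isRoot
      apply Set.infinite_of_injective_forall_mem (f := fun m : ℕ => (m:ℚ))
      · exact fun a b h => Nat.cast_injective h
      · intro m
        show Polynomial.IsRoot _ _
        simp [Polynomial.IsRoot, peval m]
    exact sub_eq_zero.mp hzero
  have hco := congrArg (fun r : ℚ[X] => r.coeff k) hpq
  have hl : p.coeff k = ∑ j ∈ range n, (stirling2 n (j+1) : ℚ)/(j+1) * (stirling1 (j+1) k : ℚ) := by
    simp only [hp, Polynomial.finset_sum_coeff, Polynomial.coeff_smul, smul_eq_mul,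
      coeff_descPochhammer]
  have hr : (q + X^(n-1) - C c).coeff k
      = 1 / n * (n.choose k : ℚ) * _root_.bernoulli (n - k) + (if n - 1 = k then 1 else 0) := by
    rw [Polynomial.coeff_sub, Polynomial.coeff_add, Polynomial.coeff_C,
      if_neg (by omega : ¬ k = 0), Polynomial.coeff_X_pow]
    have hqc : q.coeff k = _root_.bernoulli (n-k) * (n.choose (n-k) : ℚ) / n := by
      simp only [hq, Polynomial.finset_sum_coeff, Polynomial.coeff_smul, Polynomial.coeff_X_pow,
        smul_eq_mul]
      rw [Finset.sum_eq_single (n-k)]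
      · rw [if_pos (by omega : k = n - (n - k))]
        ring
      · intro i hi hne
        rw [Finset.mem_range] at hi
        rw [if_neg (by omega : ¬ k = n - i), mul_zero]
      · intro h
        exact absurd (Finset.mem_range.2 (by omega)) h
    rw [hqc, Nat.choose_symm hkn]
    rcases eq_or_ne (n-1) k with h | h
    · rw [if_pos h, if_pos h.symm]; ring
    · rw [if_neg h, if_neg (Ne.symm h)]; ring
  have hL : ∑ i ∈ Finset.Icc k n, (stirling2 n i : ℚ) * (stirling1 i k : ℚ) / i
      = ∑ j ∈ range n, (stirling2 n (j+1) : ℚ)/(j+1) * (stirling1 (j+1) k : ℚ) := by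
    have e1 : ∑ i ∈ Finset.Icc k n, (stirling2 n i : ℚ) * (stirling1 i k : ℚ) / i
        = ∑ i ∈ Finset.Icc 1 n, (stirling2 n i : ℚ) * (stirling1 i k : ℚ) / i := by
      apply Finset.sum_subset (Finset.Icc_subset_Icc hk le_rfl)
      intro i hi hni
      rw [Finset.mem_Icc] at hi
      rw [Finset.mem_Icc] at hni
      have : i < k := by omega
      rw [stirling1_eq_zero this]
      simp
    rw [e1, ← Finset.Ico_add_one_right_eq_Icc, Finset.sum_Ico_eq_sum_range]
    refine Finset.sum_congr (by simp) (fun j _ => ?_)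
    rw [add_comm 1 j]
    push_cast
    ring
  rw [hL, ← hl, hco, hr]

theorem stmt7 (n k : ℕ) (hn : 0 < n) (hk : 0 < k) (hkn : k ≤ n) :
    ∑ i ∈ Finset.Icc k n, (stirling2 n i : ℚ) * (stirling1 i k : ℚ) / i =
      1 / n * (n.choose k : ℚ) * bernoulli (n - k) + (if n - 1 = k then 1 else 0) := by
  exact stmt7_aux n k hn hk hkn
end

section
/- For all positive integers n and k with n >= k, sum_{i=k}^{n} s(n, i) * S(i, k) / i = (-1)^{n-k} * ((n-1)!/k!) * sum_{l=0}^{n-k} ((-1)^l / l!) * B_l^*. -/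
open Finset

lemma stirling1_zero_right : ∀ n : ℕ, stirling1 n 0 = 0 ∨ n = 0
  | 0 => Or.inr rfl
  | n+1 => by
      rcases stirling1_zero_right n with h | h
      · left; simp [stirling1, h]
      · left; subst h; simp [stirling1]

lemma stirling1_zero_right' {n : ℕ} (hn : 0 < n) : stirling1 n 0 = 0 := by
  rcases stirling1_zero_right n with h | h
  · exact h
  · omega

lemma stirling1_eq_zero_of_lt : ∀ {n i : ℕ}, n < i → stirling1 n i = 0
  | 0, i+1, _ => by simp [stirling1]
  | n+1, i+1, h => by
      rw [stirling1, stirling1_eq_zero_of_lt (by omega), stirling1_eq_zero_of_lt (by omega)]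
      ring

lemma stirling2_eq_zero_of_lt : ∀ {i k : ℕ}, i < k → stirling2 i k = 0
  | 0, k+1, _ => by simp [stirling2]
  | i+1, k+1, h => by
      rw [stirling2, stirling2_eq_zero_of_lt (by omega), stirling2_eq_zero_of_lt (by omega)]
      ring

lemma descPoch_shift : ∀ (m : ℕ) (x : ℝ),
    (descPochhammer ℝ m).eval (x - 1) =
      ∑ i ∈ range (m+1), (stirling1 (m+1) (i+1) : ℝ) * x ^ i
  | 0, x => by simp [descPochhammer, stirling1]
  | m+1, x => by
      rw [descPochhammer_succ_right, Polynomial.eval_mul, descPoch_shift m x]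
      have hs : ∀ i, (stirling1 (m+2) (i+1) : ℝ)
          = stirling1 (m+1) i - (m+1 : ℝ) * stirling1 (m+1) (i+1) := by
        intro i; rw [show stirling1 (m+2) (i+1) = stirling1 (m+1) i - (m+1 : ℤ) * stirling1 (m+1) (i+1) from rfl]
        push_cast; ring
      have : ∑ i ∈ range (m+2), (stirling1 (m+2) (i+1) : ℝ) * x ^ i
          = (∑ i ∈ range (m+2), (stirling1 (m+1) i : ℝ) * x ^ i)
            - (m+1 : ℝ) * ∑ i ∈ range (m+2), (stirling1 (m+1) (i+1) : ℝ) * x ^ i := by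
        rw [Finset.mul_sum, ← Finset.sum_sub_distrib]
        exact Finset.sum_congr rfl fun i _ => by rw [hs]; ring
      rw [this]
      have h1 : ∑ i ∈ range (m+2), (stirling1 (m+1) i : ℝ) * x ^ i
          = x * ∑ i ∈ range (m+1), (stirling1 (m+1) (i+1) : ℝ) * x ^ i := by
        rw [Finset.sum_range_succ' (fun i => (stirling1 (m+1) i : ℝ) * x ^ i)]
        rw [stirling1_zero_right' (Nat.succ_pos m), Finset.mul_sum]
        push_cast
        simp [pow_succ]
        exact Finset.sum_congr rfl fun i _ => by ring
      have h2 : ∑ i ∈ range (m+2), (stirling1 (m+1) (i+1) : ℝ) * x ^ i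
          = ∑ i ∈ range (m+1), (stirling1 (m+1) (i+1) : ℝ) * x ^ i := by
        rw [Finset.sum_range_succ, stirling1_eq_zero_of_lt (by omega)]
        simp
      rw [h1, h2]
      simp only [Polynomial.eval_sub, Polynomial.eval_natCast, Polynomial.eval_X]
      ring

lemma descPoch_succ_eval (m : ℕ) (x : ℝ) :
    (descPochhammer ℝ (m+1)).eval x = x * (descPochhammer ℝ m).eval (x - 1) := by
  rw [descPochhammer_succ_left, Polynomial.eval_mul, Polynomial.eval_comp]
  simp

lemma descPoch_diff (m : ℕ) (x : ℝ) :
    (descPochhammer ℝ (m+1)).eval x - (descPochhammer ℝ (m+1)).eval (x-1)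
      = (m+1 : ℝ) * (descPochhammer ℝ m).eval (x-1) := by
  rw [descPoch_succ_eval, descPochhammer_succ_right, Polynomial.eval_mul]
  simp only [Polynomial.eval_sub, Polynomial.eval_X, Polynomial.eval_natCast]
  ring

noncomputable def Qf (m : ℕ) (y : ℝ) : ℝ :=
  ∫ x in (0:ℝ)..y, (descPochhammer ℝ m).eval (x - 1)

lemma cont_shift (m : ℕ) : Continuous (fun x : ℝ => (descPochhammer ℝ m).eval (x - 1)) :=
  (descPochhammer ℝ m).continuous.comp (continuous_id.sub continuous_const)

lemma intble (m : ℕ) (a b : ℝ) :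
    IntervalIntegrable (fun x : ℝ => (descPochhammer ℝ m).eval (x - 1))
      MeasureTheory.volume a b := (cont_shift m).intervalIntegrable a b

lemma Qf_zero (m : ℕ) : Qf m 0 = 0 := by simp [Qf]

lemma Qf_zero_one : Qf 0 1 = 1 := by simp [Qf, descPochhammer]

lemma L1 (m : ℕ) (y : ℝ) :
    Qf (m+1) (y+1) - Qf (m+1) y = (m+1 : ℝ) * Qf m y + Qf (m+1) 1 := by
  have hadd : Qf (m+1) 1 + ∫ x in (1:ℝ)..(y+1), (descPochhammer ℝ (m+1)).eval (x-1)
      = Qf (m+1) (y+1) := intervalIntegral.integral_add_adjacent_intervals (intble _ _ _) (intble _ _ _)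
  have hsub : (∫ x in (0:ℝ)..y, (descPochhammer ℝ (m+1)).eval (x+1-1))
      = ∫ x in (1:ℝ)..(y+1), (descPochhammer ℝ (m+1)).eval (x-1) := by
    have h := intervalIntegral.integral_comp_add_right (a := 0) (b := y)
      (fun x => (descPochhammer ℝ (m+1)).eval (x-1)) 1
    simpa using h
  have hdiff : (∫ x in (0:ℝ)..y, (descPochhammer ℝ (m+1)).eval (x+1-1))
      - Qf (m+1) y = (m+1 : ℝ) * Qf m y := by
    rw [Qf, ← intervalIntegral.integral_sub]
    · rw [Qf, ← intervalIntegral.integral_const_mul]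
      apply intervalIntegral.integral_congr
      intro x _
      simp only
      rw [show x + 1 - 1 = x by ring]
      exact descPoch_diff m x
    · have : Continuous (fun x : ℝ => (descPochhammer ℝ (m+1)).eval (x+1-1)) := by
        exact (descPochhammer ℝ (m+1)).continuous.comp (by continuity : Continuous fun x:ℝ => x+1-1)
      exact this.intervalIntegrable _ _
    · exact intble _ _ _
  linarith [hadd, hsub, hdiff]

lemma Qf_eval (m : ℕ) (y : ℝ) :
    Qf m y = ∑ i ∈ range (m+1), (stirling1 (m+1) (i+1) : ℝ) * y ^ (i+1) / (i+1) := by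
  rw [Qf]
  rw [intervalIntegral.integral_congr (g := fun x => ∑ i ∈ range (m+1),
      (stirling1 (m+1) (i+1) : ℝ) * x ^ i) (fun x _ => descPoch_shift m x)]
  rw [intervalIntegral.integral_finset_sum (f := fun i x => (stirling1 (m+1) (i+1) : ℝ) * x ^ i) (fun i _ =>
      ((continuous_const.mul (continuous_pow i) : Continuous fun x : ℝ => (stirling1 (m+1) (i+1) : ℝ) * x ^ i).intervalIntegrable 0 y))]
  refine Finset.sum_congr rfl fun i _ => ?_
  rw [intervalIntegral.integral_const_mul, integral_pow]
  push_cast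
  ring

lemma alt_choose_sum {k : ℕ} (hk : 0 < k) :
    ∑ j ∈ range (k+1), (-1:ℝ)^(k+j) * (k.choose j : ℝ) = 0 := by
  have h := Int.alternating_sum_range_choose (n := k)
  rw [if_neg hk.ne'] at h
  have : ∑ j ∈ range (k+1), (-1:ℝ)^(k+j) * (k.choose j : ℝ)
      = (-1:ℝ)^k * ∑ j ∈ range (k+1), (-1:ℝ)^j * (k.choose j : ℝ) := by
    rw [Finset.mul_sum]; exact Finset.sum_congr rfl fun j _ => by rw [pow_add]; ring
  rw [this]
  have h2 : (∑ j ∈ range (k+1), (-1:ℝ)^j * (k.choose j : ℝ)) = 0 := by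
    have := congrArg (fun z : ℤ => (z : ℝ)) h
    push_cast at this
    simpa using this
  rw [h2, mul_zero]

lemma fd_shift (k : ℕ) (f : ℕ → ℝ) :
    ∑ j ∈ range (k+2), (-1:ℝ)^(k+1+j) * ((k+1).choose j : ℝ) * f j
      = ∑ j ∈ range (k+1), (-1:ℝ)^(k+j) * (k.choose j : ℝ) * (f (j+1) - f j) := by
  have hsplit : ∑ j ∈ range (k+1), (-1:ℝ)^(k+j) * (k.choose j : ℝ) * (f (j+1) - f j)
      = (∑ j ∈ range (k+1), (-1:ℝ)^(k+j) * (k.choose j : ℝ) * f (j+1))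
        - ∑ j ∈ range (k+1), (-1:ℝ)^(k+j) * (k.choose j : ℝ) * f j := by
    rw [← Finset.sum_sub_distrib]; exact Finset.sum_congr rfl fun j _ => by ring
  rw [hsplit]
  -- LHS: split using Pascal
  have pascal : ∀ j, ((k+1).choose (j+1) : ℝ) = (k.choose j : ℝ) + (k.choose (j+1) : ℝ) := by
    intro j; rw [Nat.choose_succ_succ]; push_cast; ring
  rw [Finset.sum_range_succ' (fun j => (-1:ℝ)^(k+1+j) * ((k+1).choose j : ℝ) * f j)]
  have : ∑ j ∈ range (k+1), (-1:ℝ)^(k+1+(j+1)) * ((k+1).choose (j+1) : ℝ) * f (j+1)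
      = (∑ j ∈ range (k+1), (-1:ℝ)^(k+j) * (k.choose j : ℝ) * f (j+1))
        + ∑ j ∈ range (k+1), (-1:ℝ)^(k+j) * (k.choose (j+1) : ℝ) * f (j+1) := by
    rw [← Finset.sum_add_distrib]
    refine Finset.sum_congr rfl fun j _ => ?_
    rw [pascal j, show k+1+(j+1) = (k+j)+2 by ring, pow_add]
    ring
  rw [this]
  have hlast : ∑ j ∈ range (k+1), (-1:ℝ)^(k+j) * (k.choose (j+1) : ℝ) * f (j+1)
      = -(∑ j ∈ range (k+1), (-1:ℝ)^(k+j) * (k.choose j : ℝ) * f j)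
        + (-1:ℝ)^(k+1+0) * ((k+1).choose 0 : ℝ) * f 0 * (-1) := by
    -- reindex: ∑_{j=0}^{k} a(j+1) where a j = (-1)^{k+j-1} C(k,j) f j ... do via sum_range_succ'
    have : ∑ j ∈ range (k+1), (-1:ℝ)^(k+j) * (k.choose (j+1) : ℝ) * f (j+1)
        = ∑ j ∈ range (k+1), -((-1:ℝ)^(k+(j+1)) * (k.choose (j+1) : ℝ) * f (j+1)) := by
      refine Finset.sum_congr rfl fun j _ => ?_
      rw [show k+(j+1) = (k+j)+1 by ring, pow_succ]; ring
    rw [this, Finset.sum_neg_distrib]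
    rw [show (∑ j ∈ range (k+1), (-1:ℝ)^(k+(j+1)) * (k.choose (j+1) : ℝ) * f (j+1))
        = (∑ j ∈ range (k+2), (-1:ℝ)^(k+j) * (k.choose j : ℝ) * f j)
          - (-1:ℝ)^(k+0) * (k.choose 0 : ℝ) * f 0 from by
      rw [Finset.sum_range_succ' (fun j => (-1:ℝ)^(k+j) * (k.choose j : ℝ) * f j)]; ring]
    rw [Finset.sum_range_succ, Nat.choose_succ_self]
    simp
    ring
  rw [hlast]
  ring

lemma FD : ∀ (k : ℕ), ∀ m : ℕ, k ≤ m →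
    ∑ j ∈ range (k+2), (-1:ℝ)^(k+1+j) * ((k+1).choose j : ℝ) * Qf m j
      = ((m.factorial : ℝ) / ((m-k).factorial : ℝ)) * Qf (m-k) 1 := by
  intro k
  induction k with
  | zero =>
      intro m _
      rw [Finset.sum_range_succ, Finset.sum_range_one]
      have h0 : ((m.factorial : ℝ)) ≠ 0 := Nat.cast_ne_zero.mpr m.factorial_ne_zero
      norm_num [Qf_zero]
      rw [div_self h0, one_mul]
  | succ k ih =>
      rintro m hm
      obtain ⟨m', rfl⟩ : ∃ m', m = m' + 1 := ⟨m - 1, by omega⟩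
      rw [fd_shift (k+1) (fun j => Qf (m'+1) j)]
      push_cast
      have hterm : ∀ j : ℕ, Qf (m'+1) (j+1) - Qf (m'+1) j
          = (m'+1 : ℝ) * Qf m' j + Qf (m'+1) 1 := by
        intro j
        have := L1 m' (j : ℝ)
        push_cast
        convert this using 3 <;> push_cast <;> ring
      have : ∑ j ∈ range (k+2), (-1:ℝ)^(k+1+j) * ((k+1).choose j : ℝ)
            * (Qf (m'+1) (j+1) - Qf (m'+1) j)
          = (m'+1 : ℝ) * (∑ j ∈ range (k+2), (-1:ℝ)^(k+1+j) * ((k+1).choose j : ℝ) * Qf m' j)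
            + Qf (m'+1) 1 * ∑ j ∈ range (k+2), (-1:ℝ)^(k+1+j) * ((k+1).choose j : ℝ) := by
        rw [Finset.mul_sum, Finset.mul_sum, ← Finset.sum_add_distrib]
        refine Finset.sum_congr rfl fun j _ => ?_
        rw [hterm j]; ring
      rw [this, ih m' (by omega), alt_choose_sum (Nat.succ_pos k), mul_zero, add_zero]
      have hfac : ((m'+1).factorial : ℝ) = (m'+1 : ℝ) * (m'.factorial : ℝ) := by
        rw [Nat.factorial_succ]; push_cast; ring
      rw [hfac]
      ring

lemma stirling2_formula : ∀ i k : ℕ,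
    (k.factorial : ℝ) * (stirling2 i k : ℝ)
      = ∑ j ∈ range (k+1), (-1:ℝ)^(k+j) * (k.choose j : ℝ) * (j:ℝ)^i := by
  intro i
  induction i with
  | zero =>
      intro k
      match k with
      | 0 => norm_num [stirling2]
      | k+1 =>
          rw [show stirling2 0 (k+1) = 0 from rfl]
          have := alt_choose_sum (k := k+1) (Nat.succ_pos k)
          rw [show (∑ j ∈ range (k+2), (-1:ℝ)^(k+1+j) * ((k+1).choose j : ℝ) * (j:ℝ)^0)
              = ∑ j ∈ range (k+2), (-1:ℝ)^(k+1+j) * ((k+1).choose j : ℝ) from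
            Finset.sum_congr rfl fun j _ => by rw [pow_zero, mul_one]]
          rw [this]
          norm_num
  | succ i ih =>
      intro k
      match k with
      | 0 =>
          rw [show stirling2 (i+1) 0 = 0 from rfl]
          norm_num
      | k+1 =>
          -- RHS = (k+1) * E
          have hre : ∑ j ∈ range (k+2), (-1:ℝ)^(k+1+j) * ((k+1).choose j : ℝ) * (j:ℝ)^(i+1)
              = (k+1:ℝ) * ∑ j ∈ range (k+1), (-1:ℝ)^(k+j) * (k.choose j : ℝ) * ((j:ℝ)+1)^i := by
            rw [Finset.sum_range_succ'
              (fun j => (-1:ℝ)^(k+1+j) * ((k+1).choose j : ℝ) * (j:ℝ)^(i+1))]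
            rw [Finset.mul_sum]
            have : ∀ j ∈ range (k+1),
                (-1:ℝ)^(k+1+(j+1)) * ((k+1).choose (j+1) : ℝ) * ((j+1:ℕ):ℝ)^(i+1)
                = (k+1:ℝ) * ((-1:ℝ)^(k+j) * (k.choose j : ℝ) * ((j:ℝ)+1)^i) := by
              intro j _
              have hc : (k+1:ℝ) * (k.choose j : ℝ) = ((k+1).choose (j+1) : ℝ) * (j+1:ℝ) := by
                have := Nat.add_one_mul_choose_eq k j
                have := congrArg (fun z : ℕ => (z : ℝ)) this
                push_cast at this
                linarith
              push_cast
              rw [show k+1+(j+1) = (k+j)+2 by ring, pow_add]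
              rw [pow_succ (((j:ℝ))+1) i]
              linear_combination (-((-1:ℝ)^(k+j) * ((j:ℝ)+1)^i)) * hc
            rw [Finset.sum_congr rfl this]
            push_cast
            ring
          rw [hre]
          -- E = D(i,k) + D(i,k+1) via fd_shift with f j = j^i
          have hfd := fd_shift k (fun j => (j:ℝ)^i)
          -- hfd : D(i,k+1)-sum = ∑ (-1)^{k+j} C(k,j) ((j+1)^i - j^i)
          have hE : ∑ j ∈ range (k+1), (-1:ℝ)^(k+j) * (k.choose j : ℝ) * ((j:ℝ)+1)^i
              = (∑ j ∈ range (k+2), (-1:ℝ)^(k+1+j) * ((k+1).choose j : ℝ) * (j:ℝ)^i)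
                + ∑ j ∈ range (k+1), (-1:ℝ)^(k+j) * (k.choose j : ℝ) * (j:ℝ)^i := by
            rw [hfd]
            rw [← Finset.sum_add_distrib]
            refine Finset.sum_congr rfl fun j _ => ?_
            push_cast
            ring
          rw [hE, ← ih (k+1), ← ih k]
          rw [show (stirling2 (i+1) (k+1) : ℝ)
              = (stirling2 i k : ℝ) + (k+1:ℝ) * (stirling2 i (k+1) : ℝ) from by
            rw [show stirling2 (i+1) (k+1) = stirling2 i k + (k+1) * stirling2 i (k+1) from rfl]
            push_cast; ring]
          rw [Nat.factorial_succ]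
          push_cast
          ring

lemma alt_desc (m : ℕ) (x : ℝ) :
    ∑ l ∈ range (m+1), (-1:ℝ)^l / (l.factorial : ℝ) * (descPochhammer ℝ l).eval x
      = (-1:ℝ)^m / (m.factorial : ℝ) * (descPochhammer ℝ m).eval (x-1) := by
  induction m with
  | zero => simp [descPochhammer]
  | succ m ih =>
      rw [Finset.sum_range_succ, ih]
      have hd := descPoch_diff m x
      have h1 : ((m+1).factorial : ℝ) = (m+1:ℝ) * (m.factorial : ℝ) := by
        rw [Nat.factorial_succ]; push_cast; ring
      have hm : (m.factorial : ℝ) ≠ 0 := Nat.cast_ne_zero.mpr m.factorial_ne_zero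
      have hm1 : (m+1 : ℝ) ≠ 0 := by positivity
      rw [h1]
      field_simp
      rw [pow_succ]
      linear_combination (-(-1:ℝ)^m) * hd
lemma bern_sum (m : ℕ) :
    ∑ l ∈ range (m+1), (-1:ℝ)^l / (l.factorial : ℝ) * bernoulliStar l
      = (-1:ℝ)^m / (m.factorial : ℝ) * Qf m 1 := by
  have : ∀ l, (-1:ℝ)^l / (l.factorial : ℝ) * bernoulliStar l
      = ∫ x in (0:ℝ)..1, (-1:ℝ)^l / (l.factorial : ℝ) * (descPochhammer ℝ l).eval x := by
    intro l
    rw [bernoulliStar, intervalIntegral.integral_const_mul]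
  rw [Finset.sum_congr rfl fun l _ => this l]
  rw [← intervalIntegral.integral_finset_sum (f := fun l x => (-1:ℝ)^l / (l.factorial : ℝ) * (descPochhammer ℝ l).eval x) (fun l _ =>
    ((continuous_const.mul (descPochhammer ℝ l).continuous : Continuous fun x : ℝ => (-1:ℝ)^l / (l.factorial : ℝ) * (descPochhammer ℝ l).eval x).intervalIntegrable 0 1))]
  rw [intervalIntegral.integral_congr (g := fun x =>
      (-1:ℝ)^m / (m.factorial : ℝ) * (descPochhammer ℝ m).eval (x-1))
      (fun x _ => alt_desc m x)]
  rw [Qf, intervalIntegral.integral_const_mul]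


lemma Qnat (n : ℕ) (hn : 0 < n) (y : ℝ) :
    ∑ i ∈ Finset.Icc 1 n, (stirling1 n i : ℝ) * y ^ i / i = Qf (n-1) y := by
  obtain ⟨m, rfl⟩ : ∃ m, n = m + 1 := ⟨n-1, by omega⟩
  rw [Qf_eval]
  rw [← Finset.Ico_add_one_right_eq_Icc, Finset.sum_Ico_eq_sum_range]
  simp only [Nat.add_sub_cancel, Nat.succ_sub_one]
  refine Finset.sum_congr (by norm_num) fun i _ => ?_
  rw [show 1 + i = i + 1 by omega]
  push_cast
  ring

theorem stmt9 (n k : ℕ) (hn : 0 < n) (hk : 0 < k) (hkn : k ≤ n) :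
    ∑ i ∈ Finset.Icc k n, (stirling1 n i : ℝ) * (stirling2 i k : ℝ) / i =
      (-1 : ℝ) ^ (n - k) * ((n - 1).factorial : ℝ) / (k.factorial : ℝ) *
        ∑ l ∈ Finset.range (n - k + 1), (-1 : ℝ) ^ l / (l.factorial : ℝ) * bernoulliStar l := by
  have hkf : ((k.factorial : ℝ)) ≠ 0 := Nat.cast_ne_zero.mpr k.factorial_ne_zero
  apply mul_left_cancel₀ hkf
  have hext : ∑ i ∈ Finset.Icc k n, (stirling1 n i : ℝ) * (stirling2 i k : ℝ) / i
      = ∑ i ∈ Finset.Icc 1 n, (stirling1 n i : ℝ) * (stirling2 i k : ℝ) / i := by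
    refine Finset.sum_subset (Finset.Icc_subset_Icc (by omega) le_rfl) ?_
    intro i hi hni
    simp only [Finset.mem_Icc] at hi hni
    rw [stirling2_eq_zero_of_lt (show i < k by omega)]
    simp
  rw [hext]
  have lhs1 : (k.factorial:ℝ) * ∑ i ∈ Finset.Icc 1 n, (stirling1 n i:ℝ) * (stirling2 i k:ℝ) / i
      = ∑ j ∈ range (k+1), (-1:ℝ)^(k+j) * (k.choose j:ℝ) * Qf (n-1) (j:ℝ) := by
    rw [Finset.mul_sum]
    have hstep : ∀ i ∈ Finset.Icc 1 n,
        (k.factorial:ℝ) * ((stirling1 n i:ℝ) * (stirling2 i k:ℝ) / i)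
        = ∑ j ∈ range (k+1), (-1:ℝ)^(k+j) * (k.choose j:ℝ) * ((stirling1 n i:ℝ) * (j:ℝ)^i / i) := by
      intro i _
      rw [show (k.factorial:ℝ) * ((stirling1 n i:ℝ) * (stirling2 i k:ℝ) / i)
          = ((k.factorial:ℝ) * (stirling2 i k:ℝ)) * ((stirling1 n i:ℝ) / i) from by ring,
        stirling2_formula i k, Finset.sum_mul]
      exact Finset.sum_congr rfl fun j _ => by ring
    rw [Finset.sum_congr rfl hstep, Finset.sum_comm]
    refine Finset.sum_congr rfl fun j _ => ?_
    rw [← Qnat n hn (j:ℝ), Finset.mul_sum]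
  rw [lhs1]
  obtain ⟨k', rfl⟩ : ∃ k', k = k' + 1 := ⟨k-1, by omega⟩
  have hfd := FD k' (n-1) (by omega)
  rw [show n - 1 - k' = n - (k'+1) from by omega] at hfd
  rw [show k' + 1 + 1 = k' + 2 from rfl, hfd]
  rw [bern_sum (n-(k'+1))]
  have hsq : (-1:ℝ)^(n-(k'+1)) * (-1:ℝ)^(n-(k'+1)) = 1 := by
    rw [← pow_add, ← two_mul, pow_mul]
    norm_num
  rw [show ((k'+1).factorial:ℝ) *
      ((-1:ℝ)^(n-(k'+1)) * ((n-1).factorial:ℝ) / ((k'+1).factorial:ℝ) *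
        ((-1:ℝ)^(n-(k'+1)) / ((n-(k'+1)).factorial:ℝ) * Qf (n-(k'+1)) 1))
      = ((-1:ℝ)^(n-(k'+1)) * ((n-1).factorial:ℝ) / ((k'+1).factorial:ℝ) * ((k'+1).factorial:ℝ)) *
        ((-1:ℝ)^(n-(k'+1)) / ((n-(k'+1)).factorial:ℝ) * Qf (n-(k'+1)) 1) from by ring]
  rw [div_mul_cancel₀ _ hkf]
  rw [show ((-1:ℝ)^(n-(k'+1)) * ((n-1).factorial:ℝ)) *
        ((-1:ℝ)^(n-(k'+1)) / ((n-(k'+1)).factorial:ℝ) * Qf (n-(k'+1)) 1)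
      = ((-1:ℝ)^(n-(k'+1)) * (-1:ℝ)^(n-(k'+1))) *
        (((n-1).factorial:ℝ) / ((n-(k'+1)).factorial:ℝ) * Qf (n-(k'+1)) 1) from by ring]
  rw [hsq, one_mul]
end
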